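/- arXiv:2010.16009 — 2 statements merged into one kernel-verified Lean document; each statement's English description precedes it below -/
import Mathlib

section
/- Fix ε ∈ (0,1), β ∈ (0,1) and k ∈ {1,2,…,N}. If ℙ[(1−ε)(i−1)/N + ε ≥ F(T_(i)) for all i ∈ {1,2,…,k}] ≥ β, then ℙ[C(s) ≥ (1−ε)C(0) for all s ∈ {1,2,…,⌊T_(k)⌋}] ≥ β. -/
open MeasureTheory ProbabilityTheory Finset

/-- Empirical distribution function `F̂_N(t) = (1/N) #{i : T_i ≤ t}`. -/
noncomputable def empCDF {Ω : Type*} {N : ℕ} (T : Fin N → Ω → ℝ) (t : ℝ) (ω : Ω) : ℝ :=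
  ((Finset.univ.filter fun i : Fin N => T i ω ≤ t).card : ℝ) / N

/-- The ratio `r(s) = (1 − F(s))/(1 − F̂_N(s))`, with convention `r(s) = 1` if `F̂_N(s) = 1`. -/
noncomputable def ratio {Ω : Type*} {N : ℕ} (T : Fin N → Ω → ℝ) (F : ℝ → ℝ) (s : ℝ)
    (ω : Ω) : ℝ :=
  if empCDF T s ω = 1 then 1 else (1 - F s) / (1 - empCDF T s ω)

/-- `Tord i`, for `1 ≤ i ≤ N`, are the order statistics of `T_1, …, T_N`:
for every `ω` they are nondecreasing in `i` and are a permutation of the `T i ω`. -/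
def IsOrderStat {Ω : Type*} {N : ℕ} (T : Fin N → Ω → ℝ) (Tord : ℕ → Ω → ℝ) : Prop :=
  ∀ ω : Ω, (∀ i j : ℕ, 1 ≤ i → i ≤ j → j ≤ N → Tord i ω ≤ Tord j ω) ∧
    ∃ σ : Equiv.Perm (Fin N), ∀ i : Fin N, Tord (i.1 + 1) ω = T (σ i) ω

/-- If the `j`-th order statistic is `≤ s`, then at least `j` of the `T i` are `≤ s`. -/
lemma orderStat_count_ge {Ω : Type*} {N : ℕ} (T : Fin N → Ω → ℝ) (Tord : ℕ → Ω → ℝ) (ω : Ω)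
    (hmono : ∀ i j : ℕ, 1 ≤ i → i ≤ j → j ≤ N → Tord i ω ≤ Tord j ω)
    (σ : Equiv.Perm (Fin N)) (hσ : ∀ i : Fin N, Tord (i.1 + 1) ω = T (σ i) ω)
    (s : ℝ) (j : ℕ) (hj1 : 1 ≤ j) (hjN : j ≤ N) (hle : Tord j ω ≤ s) :
    j ≤ (univ.filter fun i : Fin N => T i ω ≤ s).card := by
  have hNpos : 0 < N := lt_of_lt_of_le hj1 hjN
  have := Finset.card_le_card_of_injOn (fun p : ℕ => σ ⟨p % N, Nat.mod_lt _ hNpos⟩)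
    (s := Finset.range j) (t := univ.filter fun i : Fin N => T i ω ≤ s) ?_ ?_
  · simpa using this
  · intro p hp
    simp only [Finset.mem_coe, Finset.mem_range] at hp
    have hpN : p % N = p := Nat.mod_eq_of_lt (lt_of_lt_of_le hp hjN)
    simp only [Finset.mem_coe, Finset.mem_filter, Finset.mem_univ, true_and]
    have := hσ ⟨p % N, Nat.mod_lt _ hNpos⟩
    rw [← this]
    simp only [hpN]
    exact le_trans (hmono (p+1) j (Nat.le_add_left 1 p) hp hjN) hle
  · intro p hp q hq hpq
    simp only [Finset.mem_coe, Finset.mem_range] at hp hq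
    have := σ.injective hpq
    have : p % N = q % N := congrArg Fin.val this
    rwa [Nat.mod_eq_of_lt (lt_of_lt_of_le hp hjN),
      Nat.mod_eq_of_lt (lt_of_lt_of_le hq hjN)] at this

/-- If the `j`-th order statistic is `> s`, then at most `j - 1` of the `T i` are `≤ s`. -/
lemma orderStat_count_le {Ω : Type*} {N : ℕ} (T : Fin N → Ω → ℝ) (Tord : ℕ → Ω → ℝ) (ω : Ω)
    (hmono : ∀ i j : ℕ, 1 ≤ i → i ≤ j → j ≤ N → Tord i ω ≤ Tord j ω)
    (σ : Equiv.Perm (Fin N)) (hσ : ∀ i : Fin N, Tord (i.1 + 1) ω = T (σ i) ω)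
    (s : ℝ) (j : ℕ) (hj1 : 1 ≤ j) (hgt : s < Tord j ω) :
    (univ.filter fun i : Fin N => T i ω ≤ s).card ≤ j - 1 := by
  have := Finset.card_le_card_of_injOn (fun i : Fin N => (σ.symm i).1)
    (s := univ.filter fun i : Fin N => T i ω ≤ s) (t := Finset.range (j-1)) ?_ ?_
  · simpa using this
  · intro i hi
    simp only [Finset.mem_coe, Finset.mem_filter, Finset.mem_univ, true_and] at hi
    have h1 : Tord ((σ.symm i).1 + 1) ω = T i ω := by
      have := hσ (σ.symm i); rwa [Equiv.apply_symm_apply] at this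
    simp only [Finset.mem_coe, Finset.mem_range]
    by_contra hc
    push_neg at hc
    have hle' : j ≤ (σ.symm i).1 + 1 := by omega
    have := hmono j ((σ.symm i).1 + 1) hj1 hle' (by have := (σ.symm i).2; omega)
    rw [h1] at this
    linarith
  · intro a _ b _ hab
    exact σ.symm.injective (Fin.val_injective hab)

/-- Corollary 2 of the paper.  Fix `ε ∈ (0,1)`, `β ∈ (0,1)`,
`k ∈ {1,…,N}`.  If `P[(1−ε)(i−1)/N + ε ≥ F(T_(i)), ∀ i ∈ {1,…,k}] ≥ β`,
then `P[C(s) ≥ (1−ε)C(0), ∀ s ∈ {1,…,⌊T_(k)⌋}] ≥ β`. -/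
theorem stmt2 {Ω : Type*} [MeasurableSpace Ω] (P : Measure Ω) [IsProbabilityMeasure P]
    (N : ℕ) (hN : 2 ≤ N)
    (T : Fin N → Ω → ℝ) (hmeas : ∀ i, Measurable (T i))
    (hpos : ∀ i ω, 0 < T i ω)
    (hindep : iIndepFun T P)
    (F : ℝ → ℝ) (hFcont : Continuous F) (hFmono : Monotone F)
    (hcdf : ∀ i x, P {ω | T i ω ≤ x} = ENNReal.ofReal (F x))
    (Tord : ℕ → Ω → ℝ) (hord : IsOrderStat T Tord)
    (C0 : ℝ) (hC0 : 0 < C0)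
    (ε : ℝ) (hε : ε ∈ Set.Ioo (0 : ℝ) 1) (β : ℝ) (hβ : β ∈ Set.Ioo (0 : ℝ) 1)
    (k : ℕ) (hk1 : 1 ≤ k) (hkN : k ≤ N)
    (hhyp : ENNReal.ofReal β ≤
      P {ω | ∀ i : ℕ, 1 ≤ i → i ≤ k →
        F (Tord i ω) ≤ (1 - ε) * ((i : ℝ) - 1) / N + ε}) :
    ENNReal.ofReal β ≤
      P {ω | ∀ s : ℕ, 1 ≤ s → s ≤ ⌊Tord k ω⌋₊ →
        (1 - ε) * C0 ≤ C0 * ratio T F (s : ℝ) ω} := by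
  obtain ⟨hε0, hε1⟩ := hε
  refine le_trans hhyp (measure_mono ?_)
  intro ω hω
  simp only [Set.mem_setOf_eq] at hω ⊢
  intro s hs1 hs2
  obtain ⟨hmono, σ, hσ⟩ := hord ω
  have hNpos : (0 : ℝ) < N := by positivity
  -- Tord k ω is positive (it equals some T i ω)
  have hTk_pos : 0 < Tord k ω := by
    have hk' : k - 1 < N := by omega
    have := hσ ⟨k - 1, hk'⟩
    have hk'' : k - 1 + 1 = k := by omega
    rw [hk''] at this
    rw [this]
    exact hpos _ ω
  have hsk : (s : ℝ) ≤ Tord k ω := by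
    calc (s : ℝ) ≤ (⌊Tord k ω⌋₊ : ℝ) := Nat.cast_le.mpr hs2
    _ ≤ Tord k ω := Nat.floor_le hTk_pos.le
  set m : ℕ := (univ.filter fun i : Fin N => T i ω ≤ (s : ℝ)).card with hm
  have hmN : m ≤ N := by
    calc m ≤ (univ : Finset (Fin N)).card := Finset.card_filter_le _ _
    _ = N := by simp
  -- key inequality : F s ≤ (1-ε) * m / N + ε
  have hkey : F (s : ℝ) ≤ (1 - ε) * (m : ℝ) / N + ε := by
    by_cases hcase : m + 1 ≤ k
    · -- then Tord (m+1) ω > s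
      have hgt : (s : ℝ) < Tord (m + 1) ω := by
        by_contra hc
        push_neg at hc
        have := orderStat_count_ge T Tord ω hmono σ hσ (s : ℝ) (m + 1)
          (Nat.le_add_left 1 m) (le_trans hcase hkN) hc
        omega
      have h1 : F (s : ℝ) ≤ F (Tord (m + 1) ω) := hFmono hgt.le
      have h2 := hω (m + 1) (Nat.le_add_left 1 m) hcase
      have h3 : ((m + 1 : ℕ) : ℝ) - 1 = (m : ℝ) := by push_cast; ring
      rw [h3] at h2
      linarith
    · -- k ≤ m, so Tord k ω ≤ s, hence F s ≤ F (Tord k ω)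
      push_neg at hcase
      have hkm : k ≤ m := by omega
      have h1 : F (s : ℝ) ≤ F (Tord k ω) := hFmono hsk
      have h2 := hω k hk1 le_rfl
      have h3 : (1 - ε) * ((k : ℝ) - 1) / N ≤ (1 - ε) * (m : ℝ) / N := by
        have hkm' : (k : ℝ) - 1 ≤ (m : ℝ) := by
          have : (k : ℝ) ≤ (m : ℝ) := Nat.cast_le.mpr hkm
          linarith
        apply div_le_div_of_nonneg_right ?_ hNpos.le |>.trans_eq rfl
        nlinarith
      linarith
  -- now conclude about the ratio
  have hemp : empCDF T (s : ℝ) ω = (m : ℝ) / N := rfl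
  unfold ratio
  by_cases h1 : empCDF T (s : ℝ) ω = 1
  · rw [if_pos h1]
    nlinarith
  · rw [if_neg h1]
    have hmltN : m < N := by
      rcases lt_or_eq_of_le hmN with h | h
      · exact h
      · exfalso; apply h1; rw [hemp, h]; field_simp
    have hden : 0 < 1 - empCDF T (s : ℝ) ω := by
      rw [hemp]
      have : (m : ℝ) / N < 1 := by
        rw [div_lt_one hNpos]
        exact_mod_cast hmltN
      linarith
    rw [mul_comm (1 - ε) C0]
    apply mul_le_mul_of_nonneg_left ?_ hC0.le
    rw [le_div_iff₀ hden, hemp]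
    have : (1 - ε) * (1 - (m : ℝ) / N) = 1 - ((1 - ε) * (m : ℝ) / N + ε) := by
      field_simp; ring
    rw [this]
    linarith
end

section
/- Fix an integer t ≥ 0, real numbers W(t) ≥ 0 and integers L_t ≥ L_{t+1} ≥ 1. Define the income C(t) := W(t)/ä_{x+t}, the longevity credit M(t+1) := (W(t) − C(t))(1+R)(L_t − L_{t+1})/L_{t+1}, the next account value W(t+1) := (W(t) − C(t))(1+R) + M(t+1), the next income C(t+1) := W(t+1)/ä_{x+t+1}, and the empirical one-year survival probability p̂_{x+t} := L_{t+1}/L_t. Then C(t+1) = C(t) · p_{x+t} / p̂_{x+t}. Consequently, when investment returns are constant, fluctuations of the income are determined solely by the ratio of the true to the empirical survival probability. -/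
open MeasureTheory

/-- The `j`-step survival probability `ⱼp_{x+t} = P[T > t+j] / P[T > t]`. -/
noncomputable def surv {Ω : Type*} [MeasurableSpace Ω] (P : Measure Ω) (T : Ω → ℝ)
    (t j : ℕ) : ℝ :=
  (P {ω | ((t : ℝ) + (j : ℝ)) < T ω}).toReal / (P {ω | (t : ℝ) < T ω}).toReal

/-- The annuity value `ä_{x+t} = Σ_{j=0}^∞ (1+R)^{−j} · ⱼp_{x+t}`. -/
noncomputable def annuity {Ω : Type*} [MeasurableSpace Ω] (P : Measure Ω) (T : Ω → ℝ)
    (R : ℝ) (t : ℕ) : ℝ :=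
  ∑' j : ℕ, ((1 + R)⁻¹) ^ j * surv P T t j

section Aux
set_option linter.unusedSectionVars false
variable {Ω : Type*} [MeasurableSpace Ω] (P : Measure Ω) [IsProbabilityMeasure P]
  (T : Ω → ℝ) (hpos : ∀ s : ℕ, 0 < P {ω | (s : ℝ) < T ω})

include hpos

lemma toReal_pos (s : ℕ) : 0 < (P {ω | (s : ℝ) < T ω}).toReal :=
  ENNReal.toReal_pos (hpos s).ne' (measure_ne_top P _)

lemma surv_nonneg (t j : ℕ) : 0 ≤ surv P T t j :=
  div_nonneg ENNReal.toReal_nonneg ENNReal.toReal_nonneg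

lemma surv_zero (t : ℕ) : surv P T t 0 = 1 := by
  unfold surv
  simp only [Nat.cast_zero, add_zero]
  exact div_self (toReal_pos P T hpos t).ne'

lemma surv_le_one (t j : ℕ) : surv P T t j ≤ 1 := by
  unfold surv
  rw [div_le_one (toReal_pos P T hpos t)]
  refine ENNReal.toReal_mono (measure_ne_top P _) (measure_mono ?_)
  intro ω h
  exact lt_of_le_of_lt (le_add_of_nonneg_right (by positivity : (0:ℝ) ≤ (j:ℝ))) h

lemma surv_succ (t j : ℕ) :
    surv P T t (j + 1) = surv P T t 1 * surv P T (t + 1) j := by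
  unfold surv
  have h1 : (0:ℝ) < (P {ω | (t : ℝ) < T ω}).toReal := toReal_pos P T hpos t
  have h2 : (0:ℝ) < (P {ω | ((t+1 : ℕ) : ℝ) < T ω}).toReal := toReal_pos P T hpos (t+1)
  push_cast at h2 ⊢
  have e1 : {ω | (t : ℝ) + 1 < T ω} = {ω | (t : ℝ) + ((1:ℕ):ℝ) < T ω} := by norm_num
  field_simp
  ring

lemma summable_ann (R : ℝ) (hR : 0 < R) (t : ℕ) :
    Summable (fun j : ℕ => ((1 + R)⁻¹) ^ j * surv P T t j) := by
  have hv : (1 + R)⁻¹ < 1 := by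
    rw [inv_lt_one_iff₀]; right; linarith
  have hv0 : 0 ≤ (1 + R)⁻¹ := by positivity
  refine Summable.of_nonneg_of_le (fun j => ?_) (fun j => ?_)
    (summable_geometric_of_lt_one hv0 hv)
  · exact mul_nonneg (by positivity) (surv_nonneg P T hpos t j)
  · simpa using mul_le_mul_of_nonneg_left (surv_le_one P T hpos t j)
      (pow_nonneg hv0 j)

lemma annuity_rec (R : ℝ) (hR : 0 < R) (t : ℕ) :
    annuity P T R t = 1 + (1 + R)⁻¹ * surv P T t 1 * annuity P T R (t + 1) := by
  unfold annuity
  rw [Summable.tsum_eq_zero_add (summable_ann P T hpos R hR t)]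
  simp only [pow_zero, one_mul, surv_zero P T hpos t]
  congr 1
  rw [← tsum_mul_left]
  congr 1
  ext j
  rw [surv_succ P T hpos t j, pow_succ]
  ring

lemma annuity_ge_one (R : ℝ) (hR : 0 < R) (t : ℕ) : 1 ≤ annuity P T R t := by
  rw [annuity_rec P T hpos R hR t]
  have h1 : 0 ≤ annuity P T R (t + 1) :=
    tsum_nonneg fun j => mul_nonneg (by positivity) (surv_nonneg P T hpos _ j)
  have : 0 ≤ (1 + R)⁻¹ * surv P T t 1 * annuity P T R (t + 1) :=
    mul_nonneg (mul_nonneg (by positivity) (surv_nonneg P T hpos t 1)) h1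
  linarith

end Aux

/-- With `C(t) = W(t)/ä_{x+t}`, the longevity credit
`M(t+1) = (W(t) − C(t))(1+R)(L_t − L_{t+1})/L_{t+1}`,
`W(t+1) = (W(t) − C(t))(1+R) + M(t+1)`, `C(t+1) = W(t+1)/ä_{x+t+1}` and the empirical
one-year survival probability `p̂_{x+t} = L_{t+1}/L_t`, one has
`C(t+1) = C(t) · p_{x+t} / p̂_{x+t}`. -/
theorem stmt3 {Ω : Type*} [MeasurableSpace Ω] (P : Measure Ω) [IsProbabilityMeasure P]
    (T : Ω → ℝ) (hTpos : ∀ ω, 0 < T ω)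
    (hpos : ∀ s : ℕ, 0 < P {ω | (s : ℝ) < T ω})
    (R : ℝ) (hR : 0 < R)
    (t : ℕ) (W : ℝ) (hW : 0 ≤ W)
    (Lt Lt1 : ℕ) (hL : Lt1 ≤ Lt) (hL1 : 1 ≤ Lt1)
    (Ct M W' Ct1 phat : ℝ)
    (hCt : Ct = W / annuity P T R t)
    (hM : M = (W - Ct) * (1 + R) * ((Lt : ℝ) - (Lt1 : ℝ)) / (Lt1 : ℝ))
    (hW' : W' = (W - Ct) * (1 + R) + M)
    (hCt1 : Ct1 = W' / annuity P T R (t + 1))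
    (hphat : phat = (Lt1 : ℝ) / (Lt : ℝ)) :
    Ct1 = Ct * surv P T t 1 / phat := by
  have hA := annuity_ge_one P T hpos R hR t
  have hA1 := annuity_ge_one P T hpos R hR (t + 1)
  have hrec := annuity_rec P T hpos R hR t
  set A := annuity P T R t with hAdef
  set A1 := annuity P T R (t + 1) with hA1def
  set p := surv P T t 1 with hpdef
  have hAne : A ≠ 0 := by linarith
  have hA1ne : A1 ≠ 0 := by linarith
  have hRne : (1 + R) ≠ 0 := by linarith
  have hLt1 : (0 : ℝ) < (Lt1 : ℝ) := by exact_mod_cast hL1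
  have hLt : (0 : ℝ) < (Lt : ℝ) := lt_of_lt_of_le hLt1 (by exact_mod_cast hL)
  have key : (A - 1) * (1 + R) = p * A1 := by
    rw [hrec]; field_simp; ring
  subst hCt hM hW' hCt1 hphat
  clear hrec
  field_simp
  linear_combination (W * (Lt : ℝ)) * key
end
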